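/- For a uniformly random word w with n occurrences each of letters 1, 2, 3 (n ≥ 1), the covariance of s_1(w) and s_2(w) equals −n³/3, and hence the correlation coefficient of s_1 and s_2 equals −n/(2n+1). -/

import Mathlib

/-- Number of pairs of positions i < j with `w i = a` and `w j = b`. -/
def cnt (a b : ℕ) (w : List ℕ) : ℕ :=
  ((Finset.univ : Finset (Fin w.length × Fin w.length)).filter
    (fun p => p.1 < p.2 ∧ w.get p.1 = a ∧ w.get p.2 = b)).card

def s1 (w : List ℕ) : ℤ := (cnt 2 1 w : ℤ) - (cnt 1 2 w : ℤ)
def s2 (w : List ℕ) : ℤ := (cnt 3 2 w : ℤ) - (cnt 2 3 w : ℤ)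
def s3 (w : List ℕ) : ℤ := (cnt 1 3 w : ℤ) - (cnt 3 1 w : ℤ)

/-- The (finite) set of words in {1,2,3} with `a1` ones, `a2` twos and `a3` threes. -/
def W (a1 a2 a3 : ℕ) : Finset (List ℕ) :=
  (List.replicate a1 1 ++ List.replicate a2 2 ++ List.replicate a3 3).permutations.toFinset

/-- Expectation of `g` for a uniformly random word of `W n n n`. -/
noncomputable def E (n : ℕ) (g : List ℕ → ℝ) : ℝ :=
  (∑ w ∈ W n n n, g w) / ((W n n n).card : ℝ)

/-- Covariance of two word statistics over `W n n n`. -/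
noncomputable def Cov (n : ℕ) (g h : List ℕ → ℝ) : ℝ :=
  E n (fun w => (g w - E n g) * (h w - E n h))

lemma count_eq_sum (b : ℕ) (w : List ℕ) :
    (w.count b : ℕ) = ∑ j : Fin w.length, if w.get j = b then 1 else 0 := by
  induction w with
  | nil => simp
  | cons x w ih =>
    simp only [List.get_eq_getElem] at ih ⊢
    simp only [List.count_cons, List.length_cons, Fin.sum_univ_succ, beq_iff_eq, ← ih,
      List.getElem_cons_zero, List.getElem_cons_succ, Fin.val_succ, Fin.val_zero]
    rcases eq_or_ne x b with h | h <;> simp only [h, if_pos, if_neg, ite_true, ite_false] <;> omega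

lemma cnt_cons (a b x : ℕ) (w : List ℕ) :
    cnt a b (x :: w) = (if x = a then w.count b else 0) + cnt a b w := by
  unfold cnt
  rw [Finset.card_filter, Finset.card_filter, Fintype.sum_prod_type, Fintype.sum_prod_type]
  simp only [List.get_eq_getElem, List.length_cons]
  rw [Fin.sum_univ_succ]
  have e1 : (∑ j : Fin (w.length + 1), if (0 : Fin (w.length + 1)) < j ∧
        (x :: w)[(0 : Fin (w.length + 1)).val] = a ∧ (x :: w)[j.val] = b then 1 else 0)
      = if x = a then w.count b else 0 := by
    rw [Fin.sum_univ_succ]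
    simp only [Fin.val_succ, Fin.val_zero, List.getElem_cons_zero, List.getElem_cons_succ,
      Fin.succ_pos, lt_irrefl, false_and, if_false, true_and, zero_add]
    rcases eq_or_ne x a with h | h
    · simp only [h, ite_true, count_eq_sum, List.get_eq_getElem, true_and]
    · simp [h]
  rw [e1]
  congr 1
  apply Finset.sum_congr rfl
  intro i _
  rw [Fin.sum_univ_succ]
  simp only [Fin.val_succ, Fin.val_zero, List.getElem_cons_zero, List.getElem_cons_succ]
  have h0 : ¬ (i.succ < (0 : Fin (w.length + 1))) := by simp
  simp only [h0, false_and, if_false, zero_add]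
  apply Finset.sum_congr rfl
  intro j _
  congr 2
  simp [Fin.succ_lt_succ_iff]


lemma mem_W {w : List ℕ} {a b c : ℕ} : w ∈ W a b c ↔
    w.count 1 = a ∧ w.count 2 = b ∧ w.count 3 = c ∧ ∀ x ∈ w, x = 1 ∨ x = 2 ∨ x = 3 := by
  rw [W, List.mem_toFinset, List.mem_permutations, List.perm_iff_count]
  constructor
  · intro h
    refine ⟨?_, ?_, ?_, ?_⟩
    · rw [h]; simp [List.count_append, List.count_replicate]
    · rw [h]; simp [List.count_append, List.count_replicate]
    · rw [h]; simp [List.count_append, List.count_replicate]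
    · intro x hx
      have : 0 < (List.replicate a 1 ++ List.replicate b 2 ++ List.replicate c 3).count x := by
        rw [← h]; exact List.count_pos_iff.mpr hx
      by_contra hcon
      push_neg at hcon
      obtain ⟨h1, h2, h3⟩ := hcon
      simp [List.count_append, List.count_replicate, Ne.symm h1, Ne.symm h2, Ne.symm h3] at this
  · rintro ⟨h1, h2, h3, hm⟩ y
    simp only [List.count_append, List.count_replicate]
    rcases eq_or_ne y 1 with rfl | n1
    · simpa using h1
    rcases eq_or_ne y 2 with rfl | n2
    · simpa using h2
    rcases eq_or_ne y 3 with rfl | n3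
    · simpa using h3
    have : y ∉ w := fun hy => by rcases hm y hy with rfl | rfl | rfl <;> simp at n1 n2 n3
    simp [List.count_eq_zero_of_not_mem this, Ne.symm n1, Ne.symm n2, Ne.symm n3]

lemma length_of_mem_W {w : List ℕ} {a b c : ℕ} (h : w ∈ W a b c) : w.length = a + b + c := by
  rw [W, List.mem_toFinset, List.mem_permutations] at h
  have := h.length_eq
  simp at this
  omega

lemma cons_one_mem_W {w : List ℕ} {a b c : ℕ} : (1 :: w) ∈ W (a+1) b c ↔ w ∈ W a b c := by
  simp only [mem_W, List.count_cons, List.mem_cons, beq_iff_eq, reduceIte]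
  norm_num

lemma cons_two_mem_W {w : List ℕ} {a b c : ℕ} : (2 :: w) ∈ W a (b+1) c ↔ w ∈ W a b c := by
  simp only [mem_W, List.count_cons, List.mem_cons, beq_iff_eq, reduceIte]
  norm_num

lemma cons_three_mem_W {w : List ℕ} {a b c : ℕ} : (3 :: w) ∈ W a b (c+1) ↔ w ∈ W a b c := by
  simp only [mem_W, List.count_cons, List.mem_cons, beq_iff_eq, reduceIte]
  norm_num


lemma sum_W_split {M : Type*} [AddCommMonoid M] (f : List ℕ → M) (a b c : ℕ)
    (h : 0 < a + b + c) :
    ∑ w ∈ W a b c, f w =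
      (if a = 0 then 0 else ∑ w ∈ W (a-1) b c, f (1 :: w)) +
      (if b = 0 then 0 else ∑ w ∈ W a (b-1) c, f (2 :: w)) +
      (if c = 0 then 0 else ∑ w ∈ W a b (c-1), f (3 :: w)) := by
  classical
  set S1 := (W a b c).filter (fun w => w.head? = some 1) with hS1
  set S2 := (W a b c).filter (fun w => w.head? = some 2) with hS2
  set S3 := (W a b c).filter (fun w => w.head? = some 3) with hS3
  have hU : W a b c = S1 ∪ S2 ∪ S3 := by
    ext w
    simp only [hS1, hS2, hS3, Finset.mem_union, Finset.mem_filter]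
    constructor
    · intro hw
      have hlen : w.length = a + b + c := length_of_mem_W hw
      have hne : w ≠ [] := by
        intro he; rw [he] at hlen; simp at hlen; omega
      obtain ⟨x, t, rfl⟩ := List.exists_cons_of_ne_nil hne
      have hx := (mem_W.mp hw).2.2.2 x (List.mem_cons_self)
      rcases hx with rfl | rfl | rfl
      · exact Or.inl (Or.inl ⟨hw, rfl⟩)
      · exact Or.inl (Or.inr ⟨hw, rfl⟩)
      · exact Or.inr ⟨hw, rfl⟩
    · rintro ((⟨hw, _⟩ | ⟨hw, _⟩) | ⟨hw, _⟩) <;> exact hw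
  have hd12 : Disjoint S1 S2 := by
    rw [Finset.disjoint_left]
    rintro w hw1 hw2
    simp only [hS1, hS2, Finset.mem_filter] at hw1 hw2
    rw [hw1.2] at hw2; simp at hw2
  have hd3 : Disjoint (S1 ∪ S2) S3 := by
    rw [Finset.disjoint_left]
    rintro w hw1 hw3
    simp only [hS1, hS2, hS3, Finset.mem_union, Finset.mem_filter] at hw1 hw3
    rcases hw1 with ⟨_, h'⟩ | ⟨_, h'⟩ <;> (rw [h'] at hw3; simp at hw3)
  rw [hU, Finset.sum_union hd3, Finset.sum_union hd12]
  have e1 : (∑ w ∈ S1, f w) = if a = 0 then 0 else ∑ w ∈ W (a-1) b c, f (1 :: w) := by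
    rcases Nat.eq_zero_or_pos a with rfl | ha
    · rw [if_pos rfl]
      have : S1 = ∅ := by
        rw [hS1, Finset.filter_eq_empty_iff]
        intro w hw
        intro hh
        have h1 : w.count 1 = 0 := (mem_W.mp hw).1
        have hne : w ≠ [] := by intro he; rw [he] at hh; simp at hh
        obtain ⟨x, t, rfl⟩ := List.exists_cons_of_ne_nil hne
        simp only [List.head?_cons, Option.some.injEq] at hh
        subst hh
        simp [List.count_cons] at h1
      rw [this, Finset.sum_empty]
    · rw [if_neg (by omega)]
      obtain ⟨a', rfl⟩ : ∃ a', a = a' + 1 := ⟨a - 1, by omega⟩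
      have himg : S1 = (W a' b c).image (fun w => 1 :: w) := by
        ext w
        simp only [hS1, Finset.mem_filter, Finset.mem_image]
        constructor
        · rintro ⟨hw, hh⟩
          have hne : w ≠ [] := by intro he; rw [he] at hh; simp at hh
          obtain ⟨x, t, rfl⟩ := List.exists_cons_of_ne_nil hne
          simp only [List.head?_cons, Option.some.injEq] at hh
          subst hh
          exact ⟨t, cons_one_mem_W.mp hw, rfl⟩
        · rintro ⟨t, ht, rfl⟩
          exact ⟨cons_one_mem_W.mpr ht, rfl⟩
      rw [himg, Finset.sum_image (by intro x _ y _ hxy; exact (List.cons_injective.eq_iff).mp hxy)]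
      simp
  have e2 : (∑ w ∈ S2, f w) = if b = 0 then 0 else ∑ w ∈ W a (b-1) c, f (2 :: w) := by
    rcases Nat.eq_zero_or_pos b with rfl | hb
    · rw [if_pos rfl]
      have : S2 = ∅ := by
        rw [hS2, Finset.filter_eq_empty_iff]
        intro w hw hh
        have h1 : w.count 2 = 0 := (mem_W.mp hw).2.1
        have hne : w ≠ [] := by intro he; rw [he] at hh; simp at hh
        obtain ⟨x, t, rfl⟩ := List.exists_cons_of_ne_nil hne
        simp only [List.head?_cons, Option.some.injEq] at hh
        subst hh
        simp [List.count_cons] at h1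
      rw [this, Finset.sum_empty]
    · rw [if_neg (by omega)]
      obtain ⟨b', rfl⟩ : ∃ b', b = b' + 1 := ⟨b - 1, by omega⟩
      have himg : S2 = (W a b' c).image (fun w => 2 :: w) := by
        ext w
        simp only [hS2, Finset.mem_filter, Finset.mem_image]
        constructor
        · rintro ⟨hw, hh⟩
          have hne : w ≠ [] := by intro he; rw [he] at hh; simp at hh
          obtain ⟨x, t, rfl⟩ := List.exists_cons_of_ne_nil hne
          simp only [List.head?_cons, Option.some.injEq] at hh
          subst hh
          exact ⟨t, cons_two_mem_W.mp hw, rfl⟩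
        · rintro ⟨t, ht, rfl⟩
          exact ⟨cons_two_mem_W.mpr ht, rfl⟩
      rw [himg, Finset.sum_image (by intro x _ y _ hxy; exact (List.cons_injective.eq_iff).mp hxy)]
      simp
  have e3 : (∑ w ∈ S3, f w) = if c = 0 then 0 else ∑ w ∈ W a b (c-1), f (3 :: w) := by
    rcases Nat.eq_zero_or_pos c with rfl | hc
    · rw [if_pos rfl]
      have : S3 = ∅ := by
        rw [hS3, Finset.filter_eq_empty_iff]
        intro w hw hh
        have h1 : w.count 3 = 0 := (mem_W.mp hw).2.2.1
        have hne : w ≠ [] := by intro he; rw [he] at hh; simp at hh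
        obtain ⟨x, t, rfl⟩ := List.exists_cons_of_ne_nil hne
        simp only [List.head?_cons, Option.some.injEq] at hh
        subst hh
        simp [List.count_cons] at h1
      rw [this, Finset.sum_empty]
    · rw [if_neg (by omega)]
      obtain ⟨c', rfl⟩ : ∃ c', c = c' + 1 := ⟨c - 1, by omega⟩
      have himg : S3 = (W a b c').image (fun w => 3 :: w) := by
        ext w
        simp only [hS3, Finset.mem_filter, Finset.mem_image]
        constructor
        · rintro ⟨hw, hh⟩
          have hne : w ≠ [] := by intro he; rw [he] at hh; simp at hh
          obtain ⟨x, t, rfl⟩ := List.exists_cons_of_ne_nil hne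
          simp only [List.head?_cons, Option.some.injEq] at hh
          subst hh
          exact ⟨t, cons_three_mem_W.mp hw, rfl⟩
        · rintro ⟨t, ht, rfl⟩
          exact ⟨cons_three_mem_W.mpr ht, rfl⟩
      rw [himg, Finset.sum_image (by intro x _ y _ hxy; exact (List.cons_injective.eq_iff).mp hxy)]
      simp
  rw [e1, e2, e3]

lemma cnt_nil (a b : ℕ) : cnt a b [] = 0 := by
  simp [cnt]

lemma s1_nil : s1 [] = 0 := by simp [s1, cnt_nil]
lemma s2_nil : s2 [] = 0 := by simp [s2, cnt_nil]

lemma s1_cons_one (w : List ℕ) : s1 (1 :: w) = s1 w - (w.count 2 : ℤ) := by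
  simp only [s1, cnt_cons]; norm_num; ring
lemma s1_cons_two (w : List ℕ) : s1 (2 :: w) = s1 w + (w.count 1 : ℤ) := by
  simp only [s1, cnt_cons]; norm_num; ring
lemma s1_cons_three (w : List ℕ) : s1 (3 :: w) = s1 w := by
  simp only [s1, cnt_cons]; norm_num
lemma s2_cons_one (w : List ℕ) : s2 (1 :: w) = s2 w := by
  simp only [s2, cnt_cons]; norm_num
lemma s2_cons_two (w : List ℕ) : s2 (2 :: w) = s2 w - (w.count 3 : ℤ) := by
  simp only [s2, cnt_cons]; norm_num; ring
lemma s2_cons_three (w : List ℕ) : s2 (3 :: w) = s2 w + (w.count 2 : ℤ) := by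
  simp only [s2, cnt_cons]; norm_num; ring

lemma W_zero : W 0 0 0 = {[]} := by
  ext w
  simp only [mem_W, Finset.mem_singleton]
  constructor
  · rintro ⟨h1, h2, h3, hm⟩
    rcases w with _ | ⟨x, t⟩
    · rfl
    · exfalso
      rcases hm x (List.mem_cons_self) with rfl | rfl | rfl <;>
        simp [List.count_cons] at h1 h2 h3
  · rintro rfl; simp

lemma card_W_split (a b c : ℕ) (h : 0 < a + b + c) :
    (W a b c).card = (if a = 0 then 0 else (W (a-1) b c).card) +
      (if b = 0 then 0 else (W a (b-1) c).card) +
      (if c = 0 then 0 else (W a b (c-1)).card) := by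
  have := sum_W_split (fun _ => (1:ℕ)) a b c h
  simp only [Finset.card_eq_sum_ones]
  exact this

lemma fact_W : ∀ t a b c : ℕ, a + b + c = t →
    a.factorial * b.factorial * c.factorial * (W a b c).card = t.factorial := by
  intro t
  induction t using Nat.strong_induction_on with
  | _ t ih =>
    intro a b c ht
    rcases Nat.eq_zero_or_pos t with rfl | hpos
    · obtain ⟨rfl, rfl, rfl⟩ : a = 0 ∧ b = 0 ∧ c = 0 := by omega
      simp [W_zero]
    · obtain ⟨t', rfl⟩ : ∃ t', t = t' + 1 := ⟨t - 1, by omega⟩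
      rw [card_W_split a b c (by omega)]
      have h1 : a.factorial * b.factorial * c.factorial *
          (if a = 0 then 0 else (W (a-1) b c).card) = a * t'.factorial := by
        rcases a with _ | a'
        · simp
        · simp only [Nat.add_sub_cancel, if_neg (Nat.succ_ne_zero a')]
          have := ih t' (by omega) a' b c (by omega)
          rw [Nat.factorial_succ]
          calc (a' + 1) * a'.factorial * b.factorial * c.factorial * (W a' b c).card
              = (a' + 1) * (a'.factorial * b.factorial * c.factorial * (W a' b c).card) := by ring
            _ = (a' + 1) * t'.factorial := by rw [this]
      have h2 : a.factorial * b.factorial * c.factorial *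
          (if b = 0 then 0 else (W a (b-1) c).card) = b * t'.factorial := by
        rcases b with _ | b'
        · simp
        · simp only [Nat.add_sub_cancel, if_neg (Nat.succ_ne_zero b')]
          have := ih t' (by omega) a (b') c (by omega)
          rw [Nat.factorial_succ]
          calc a.factorial * ((b' + 1) * b'.factorial) * c.factorial * (W a b' c).card
              = (b' + 1) * (a.factorial * b'.factorial * c.factorial * (W a b' c).card) := by ring
            _ = (b' + 1) * t'.factorial := by rw [this]
      have h3 : a.factorial * b.factorial * c.factorial *
          (if c = 0 then 0 else (W a b (c-1)).card) = c * t'.factorial := by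
        rcases c with _ | c'
        · simp
        · simp only [Nat.add_sub_cancel, if_neg (Nat.succ_ne_zero c')]
          have := ih t' (by omega) a b c' (by omega)
          rw [Nat.factorial_succ]
          calc a.factorial * b.factorial * ((c' + 1) * c'.factorial) * (W a b c').card
              = (c' + 1) * (a.factorial * b.factorial * c'.factorial * (W a b c').card) := by ring
            _ = (c' + 1) * t'.factorial := by rw [this]
      rw [Nat.mul_add, Nat.mul_add, h1, h2, h3, Nat.factorial_succ]
      have : a + b + c = t' + 1 := ht
      nlinarith [this]

lemma guarded_r12 (a b c : ℕ) :
    (b : ℤ) * (if a = 0 then 0 else ((W (a-1) b c).card : ℤ)) =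
    (a : ℤ) * (if b = 0 then 0 else ((W a (b-1) c).card : ℤ)) := by
  rcases a with _ | a'
  · simp
  rcases b with _ | b'
  · simp
  simp only [Nat.add_sub_cancel, if_neg (Nat.succ_ne_zero a'), if_neg (Nat.succ_ne_zero b')]
  have h1 := fact_W (a' + (b'+1) + c) a' (b'+1) c rfl
  have h2 := fact_W (a'+1 + b' + c) (a'+1) b' c rfl
  have hK : a' + (b'+1) + c = a'+1 + b' + c := by omega
  rw [hK] at h1
  have h1' : (a'.factorial : ℤ) * ((b'+1) * b'.factorial) * c.factorial *
      ((W a' (b'+1) c).card : ℤ) = ((a'+1+b'+c).factorial : ℤ) := by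
    exact_mod_cast (by rw [← Nat.factorial_succ]; exact_mod_cast h1 : (a'.factorial * ((b'+1) * b'.factorial) * c.factorial * (W a' (b'+1) c).card : ℕ) = (a'+1+b'+c).factorial)
  have h2' : ((a'+1) * a'.factorial : ℤ) * b'.factorial * c.factorial *
      ((W (a'+1) b' c).card : ℤ) = ((a'+1+b'+c).factorial : ℤ) := by
    exact_mod_cast (by rw [← Nat.factorial_succ]; exact_mod_cast h2 : ((a'+1) * a'.factorial * b'.factorial * c.factorial * (W (a'+1) b' c).card : ℕ) = (a'+1+b'+c).factorial)
  have hD : (a'.factorial : ℤ) * b'.factorial * c.factorial ≠ 0 := by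
    positivity
  apply mul_left_cancel₀ hD
  push_cast
  linear_combination h1' - h2'

lemma guarded_r23 (a b c : ℕ) :
    (c : ℤ) * (if b = 0 then 0 else ((W a (b-1) c).card : ℤ)) =
    (b : ℤ) * (if c = 0 then 0 else ((W a b (c-1)).card : ℤ)) := by
  rcases b with _ | b'
  · simp
  rcases c with _ | c'
  · simp
  simp only [Nat.add_sub_cancel, if_neg (Nat.succ_ne_zero b'), if_neg (Nat.succ_ne_zero c')]
  have h1 := fact_W (a + b' + (c'+1)) a b' (c'+1) rfl
  have h2 := fact_W (a + (b'+1) + c') a (b'+1) c' rfl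
  have hK : a + b' + (c'+1) = a + (b'+1) + c' := by omega
  rw [hK] at h1
  have h1' : (a.factorial : ℤ) * b'.factorial * ((c'+1) * c'.factorial) *
      ((W a b' (c'+1)).card : ℤ) = ((a+(b'+1)+c').factorial : ℤ) := by
    exact_mod_cast (by rw [← Nat.factorial_succ]; exact_mod_cast h1 : (a.factorial * b'.factorial * ((c'+1) * c'.factorial) * (W a b' (c'+1)).card : ℕ) = (a+(b'+1)+c').factorial)
  have h2' : (a.factorial : ℤ) * ((b'+1) * b'.factorial) * c'.factorial *
      ((W a (b'+1) c').card : ℤ) = ((a+(b'+1)+c').factorial : ℤ) := by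
    exact_mod_cast (by rw [← Nat.factorial_succ]; exact_mod_cast h2 : (a.factorial * ((b'+1) * b'.factorial) * c'.factorial * (W a (b'+1) c').card : ℕ) = (a+(b'+1)+c').factorial)
  have hD : (a.factorial : ℤ) * b'.factorial * c'.factorial ≠ 0 := by
    positivity
  apply mul_left_cancel₀ hD
  push_cast
  linear_combination h1' - h2'

lemma sum_s1_eq : ∀ t a b c : ℕ, a + b + c = t → ∑ w ∈ W a b c, s1 w = 0 := by
  intro t
  induction t using Nat.strong_induction_on with
  | _ t ih =>
    intro a b c ht
    rcases Nat.eq_zero_or_pos t with rfl | hpos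
    · obtain ⟨rfl, rfl, rfl⟩ : a = 0 ∧ b = 0 ∧ c = 0 := by omega
      simp [W_zero, s1_nil]
    · rw [sum_W_split s1 a b c (by omega)]
      have B1 : (if a = 0 then 0 else ∑ w ∈ W (a-1) b c, s1 (1 :: w)) =
          -(b:ℤ) * (if a = 0 then 0 else ((W (a-1) b c).card : ℤ)) := by
        rcases a with _ | a'
        · simp
        · simp only [Nat.add_sub_cancel, if_neg (Nat.succ_ne_zero a')]
          have hc : ∑ w ∈ W a' b c, s1 (1 :: w) = ∑ w ∈ W a' b c, (s1 w - (b:ℤ)) := Finset.sum_congr rfl (fun w hw => by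
            rw [s1_cons_one, (mem_W.mp hw).2.1])
          rw [hc]
          rw [Finset.sum_sub_distrib, ih (t-1) (by omega) a' b c (by omega), Finset.sum_const]
          simp [mul_comm]
      have B2 : (if b = 0 then 0 else ∑ w ∈ W a (b-1) c, s1 (2 :: w)) =
          (a:ℤ) * (if b = 0 then 0 else ((W a (b-1) c).card : ℤ)) := by
        rcases b with _ | b'
        · simp
        · simp only [Nat.add_sub_cancel, if_neg (Nat.succ_ne_zero b')]
          have hc : ∑ w ∈ W a b' c, s1 (2 :: w) = ∑ w ∈ W a b' c, (s1 w + (a:ℤ)) := Finset.sum_congr rfl (fun w hw => by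
            rw [s1_cons_two, (mem_W.mp hw).1])
          rw [hc]
          rw [Finset.sum_add_distrib, ih (t-1) (by omega) a b' c (by omega), Finset.sum_const]
          simp [mul_comm]
      have B3 : (if c = 0 then 0 else ∑ w ∈ W a b (c-1), s1 (3 :: w)) = 0 := by
        rcases c with _ | c'
        · simp
        · simp only [Nat.add_sub_cancel, if_neg (Nat.succ_ne_zero c')]
          have hc : ∑ w ∈ W a b (c') , s1 (3 :: w) = ∑ w ∈ W a b c', s1 w := Finset.sum_congr rfl (fun w hw => by
            rw [s1_cons_three])
          rw [hc]
          exact ih (t-1) (by omega) a b c' (by omega)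
      rw [B1, B2, B3]
      linear_combination -(guarded_r12 a b c)

lemma sum_s2_eq : ∀ t a b c : ℕ, a + b + c = t → ∑ w ∈ W a b c, s2 w = 0 := by
  intro t
  induction t using Nat.strong_induction_on with
  | _ t ih =>
    intro a b c ht
    rcases Nat.eq_zero_or_pos t with rfl | hpos
    · obtain ⟨rfl, rfl, rfl⟩ : a = 0 ∧ b = 0 ∧ c = 0 := by omega
      simp [W_zero, s2_nil]
    · rw [sum_W_split s2 a b c (by omega)]
      have B1 : (if a = 0 then 0 else ∑ w ∈ W (a-1) b c, s2 (1 :: w)) = 0 := by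
        rcases a with _ | a'
        · simp
        · simp only [Nat.add_sub_cancel, if_neg (Nat.succ_ne_zero a')]
          have hc : ∑ w ∈ W a' b c, s2 (1 :: w) = ∑ w ∈ W a' b c, s2 w := Finset.sum_congr rfl (fun w hw => by
            rw [s2_cons_one])
          rw [hc]
          exact ih (t-1) (by omega) a' b c (by omega)
      have B2 : (if b = 0 then 0 else ∑ w ∈ W a (b-1) c, s2 (2 :: w)) =
          -(c:ℤ) * (if b = 0 then 0 else ((W a (b-1) c).card : ℤ)) := by
        rcases b with _ | b'
        · simp
        · simp only [Nat.add_sub_cancel, if_neg (Nat.succ_ne_zero b')]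
          have hc : ∑ w ∈ W a b' c, s2 (2 :: w) = ∑ w ∈ W a b' c, (s2 w - (c:ℤ)) := Finset.sum_congr rfl (fun w hw => by
            rw [s2_cons_two, (mem_W.mp hw).2.2.1])
          rw [hc]
          rw [Finset.sum_sub_distrib, ih (t-1) (by omega) a b' c (by omega), Finset.sum_const]
          simp [mul_comm]
      have B3 : (if c = 0 then 0 else ∑ w ∈ W a b (c-1), s2 (3 :: w)) =
          (b:ℤ) * (if c = 0 then 0 else ((W a b (c-1)).card : ℤ)) := by
        rcases c with _ | c'
        · simp
        · simp only [Nat.add_sub_cancel, if_neg (Nat.succ_ne_zero c')]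
          have hc : ∑ w ∈ W a b c', s2 (3 :: w) = ∑ w ∈ W a b c', (s2 w + (b:ℤ)) := Finset.sum_congr rfl (fun w hw => by
            rw [s2_cons_three, (mem_W.mp hw).2.1])
          rw [hc]
          rw [Finset.sum_add_distrib, ih (t-1) (by omega) a b c' (by omega), Finset.sum_const]
          simp [mul_comm]
      rw [B1, B2, B3]
      linear_combination -(guarded_r23 a b c)

lemma sum_s1s2_eq : ∀ t a b c : ℕ, a + b + c = t →
    ∑ w ∈ W a b c, 3 * (s1 w * s2 w) = -((a:ℤ) * b * c) * (W a b c).card := by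
  intro t
  induction t using Nat.strong_induction_on with
  | _ t ih =>
    intro a b c ht
    rcases Nat.eq_zero_or_pos t with rfl | hpos
    · obtain ⟨rfl, rfl, rfl⟩ : a = 0 ∧ b = 0 ∧ c = 0 := by omega
      simp [W_zero, s1_nil, s2_nil]
    · rw [sum_W_split (fun w => 3 * (s1 w * s2 w)) a b c (by omega)]
      have hN : ((W a b c).card : ℤ) =
          (if a = 0 then 0 else ((W (a-1) b c).card : ℤ)) +
          (if b = 0 then 0 else ((W a (b-1) c).card : ℤ)) +
          (if c = 0 then 0 else ((W a b (c-1)).card : ℤ)) := by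
        rw [card_W_split a b c (by omega)]
        split_ifs <;> push_cast <;> ring
      have B1 : (if a = 0 then 0 else ∑ w ∈ W (a-1) b c, 3 * (s1 (1 :: w) * s2 (1 :: w))) =
          (-(((a:ℤ)-1) * b * c)) * (if a = 0 then 0 else ((W (a-1) b c).card : ℤ)) := by
        rcases a with _ | a'
        · simp
        · simp only [Nat.add_sub_cancel, if_neg (Nat.succ_ne_zero a')]
          have hc : ∑ w ∈ W a' b c, 3 * (s1 (1 :: w) * s2 (1 :: w)) =
              ∑ w ∈ W a' b c, (3 * (s1 w * s2 w) - (3 * (b:ℤ)) * s2 w) :=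
            Finset.sum_congr rfl (fun w hw => by
              rw [s1_cons_one, s2_cons_one, (mem_W.mp hw).2.1]; ring)
          rw [hc, Finset.sum_sub_distrib, ih (t-1) (by omega) a' b c (by omega),
            ← Finset.mul_sum, sum_s2_eq (a' + b + c) a' b c rfl, mul_zero, sub_zero]
          push_cast; ring
      have B2 : (if b = 0 then 0 else ∑ w ∈ W a (b-1) c, 3 * (s1 (2 :: w) * s2 (2 :: w))) =
          (-((a:ℤ) * ((b:ℤ)-1) * c) - 3 * a * c) * (if b = 0 then 0 else ((W a (b-1) c).card : ℤ)) := by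
        rcases b with _ | b'
        · simp
        · simp only [Nat.add_sub_cancel, if_neg (Nat.succ_ne_zero b')]
          have hc : ∑ w ∈ W a b' c, 3 * (s1 (2 :: w) * s2 (2 :: w)) =
              ∑ w ∈ W a b' c, (3 * (s1 w * s2 w) + (3 * (a:ℤ)) * s2 w - (3 * (c:ℤ)) * s1 w
                - 3 * ((a:ℤ) * c)) :=
            Finset.sum_congr rfl (fun w hw => by
              rw [s1_cons_two, s2_cons_two, (mem_W.mp hw).1, (mem_W.mp hw).2.2.1]; ring)
          rw [hc]
          rw [Finset.sum_sub_distrib, Finset.sum_sub_distrib, Finset.sum_add_distrib]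
          rw [ih (t-1) (by omega) a b' c (by omega), ← Finset.mul_sum, ← Finset.mul_sum,
            sum_s2_eq (a + b' + c) a b' c rfl, sum_s1_eq (a + b' + c) a b' c rfl,
            mul_zero, mul_zero, Finset.sum_const]
          push_cast; ring
      have B3 : (if c = 0 then 0 else ∑ w ∈ W a b (c-1), 3 * (s1 (3 :: w) * s2 (3 :: w))) =
          (-((a:ℤ) * b * ((c:ℤ)-1))) * (if c = 0 then 0 else ((W a b (c-1)).card : ℤ)) := by
        rcases c with _ | c'
        · simp
        · simp only [Nat.add_sub_cancel, if_neg (Nat.succ_ne_zero c')]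
          have hc : ∑ w ∈ W a b c', 3 * (s1 (3 :: w) * s2 (3 :: w)) =
              ∑ w ∈ W a b c', (3 * (s1 w * s2 w) + (3 * (b:ℤ)) * s1 w) :=
            Finset.sum_congr rfl (fun w hw => by
              rw [s1_cons_three, s2_cons_three, (mem_W.mp hw).2.1]; ring)
          rw [hc, Finset.sum_add_distrib, ih (t-1) (by omega) a b c' (by omega),
            ← Finset.mul_sum, sum_s1_eq (a + b + c') a b c' rfl, mul_zero, add_zero]
          push_cast; ring
      rw [B1, B2, B3]
      linear_combination ((a:ℤ) * b * c) * hN + (c:ℤ) * guarded_r12 a b c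
        - (a:ℤ) * guarded_r23 a b c

lemma sum_s1sq_eq : ∀ t a b c : ℕ, a + b + c = t →
    ∑ w ∈ W a b c, 3 * (s1 w * s1 w) = ((a:ℤ) * b * ((a:ℤ) + b + 1)) * (W a b c).card := by
  intro t
  induction t using Nat.strong_induction_on with
  | _ t ih =>
    intro a b c ht
    rcases Nat.eq_zero_or_pos t with rfl | hpos
    · obtain ⟨rfl, rfl, rfl⟩ : a = 0 ∧ b = 0 ∧ c = 0 := by omega
      simp [W_zero, s1_nil]
    · rw [sum_W_split (fun w => 3 * (s1 w * s1 w)) a b c (by omega)]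
      have hN : ((W a b c).card : ℤ) =
          (if a = 0 then 0 else ((W (a-1) b c).card : ℤ)) +
          (if b = 0 then 0 else ((W a (b-1) c).card : ℤ)) +
          (if c = 0 then 0 else ((W a b (c-1)).card : ℤ)) := by
        rw [card_W_split a b c (by omega)]
        split_ifs <;> push_cast <;> ring
      have B1 : (if a = 0 then 0 else ∑ w ∈ W (a-1) b c, 3 * (s1 (1 :: w) * s1 (1 :: w))) =
          ((((a:ℤ)-1) * b * (((a:ℤ)-1) + b + 1)) + 3 * (b:ℤ)^2) *
            (if a = 0 then 0 else ((W (a-1) b c).card : ℤ)) := by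
        rcases a with _ | a'
        · simp
        · simp only [Nat.add_sub_cancel, if_neg (Nat.succ_ne_zero a')]
          have hc : ∑ w ∈ W a' b c, 3 * (s1 (1 :: w) * s1 (1 :: w)) =
              ∑ w ∈ W a' b c, (3 * (s1 w * s1 w) - (6 * (b:ℤ)) * s1 w + 3 * (b:ℤ)^2) :=
            Finset.sum_congr rfl (fun w hw => by
              rw [s1_cons_one, (mem_W.mp hw).2.1]; ring)
          rw [hc, Finset.sum_add_distrib, Finset.sum_sub_distrib,
            ih (t-1) (by omega) a' b c (by omega), ← Finset.mul_sum,
            sum_s1_eq (a' + b + c) a' b c rfl, mul_zero, sub_zero, Finset.sum_const]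
          push_cast; ring
      have B2 : (if b = 0 then 0 else ∑ w ∈ W a (b-1) c, 3 * (s1 (2 :: w) * s1 (2 :: w))) =
          (((a:ℤ) * ((b:ℤ)-1) * ((a:ℤ) + ((b:ℤ)-1) + 1)) + 3 * (a:ℤ)^2) *
            (if b = 0 then 0 else ((W a (b-1) c).card : ℤ)) := by
        rcases b with _ | b'
        · simp
        · simp only [Nat.add_sub_cancel, if_neg (Nat.succ_ne_zero b')]
          have hc : ∑ w ∈ W a b' c, 3 * (s1 (2 :: w) * s1 (2 :: w)) =
              ∑ w ∈ W a b' c, (3 * (s1 w * s1 w) + (6 * (a:ℤ)) * s1 w + 3 * (a:ℤ)^2) :=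
            Finset.sum_congr rfl (fun w hw => by
              rw [s1_cons_two, (mem_W.mp hw).1]; ring)
          rw [hc, Finset.sum_add_distrib, Finset.sum_add_distrib,
            ih (t-1) (by omega) a b' c (by omega), ← Finset.mul_sum,
            sum_s1_eq (a + b' + c) a b' c rfl, mul_zero, add_zero, Finset.sum_const]
          push_cast; ring
      have B3 : (if c = 0 then 0 else ∑ w ∈ W a b (c-1), 3 * (s1 (3 :: w) * s1 (3 :: w))) =
          ((a:ℤ) * b * ((a:ℤ) + b + 1)) * (if c = 0 then 0 else ((W a b (c-1)).card : ℤ)) := by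
        rcases c with _ | c'
        · simp
        · simp only [Nat.add_sub_cancel, if_neg (Nat.succ_ne_zero c')]
          have hc : ∑ w ∈ W a b c', 3 * (s1 (3 :: w) * s1 (3 :: w)) =
              ∑ w ∈ W a b c', (3 * (s1 w * s1 w)) :=
            Finset.sum_congr rfl (fun w hw => by rw [s1_cons_three])
          rw [hc, ih (t-1) (by omega) a b c' (by omega)]
      rw [B1, B2, B3]
      linear_combination (-(a:ℤ) * b * ((a:ℤ) + b + 1)) * hN +
        (-2 * ((a:ℤ) - b)) * guarded_r12 a b c

lemma sum_s2sq_eq : ∀ t a b c : ℕ, a + b + c = t →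
    ∑ w ∈ W a b c, 3 * (s2 w * s2 w) = ((b:ℤ) * c * ((b:ℤ) + c + 1)) * (W a b c).card := by
  intro t
  induction t using Nat.strong_induction_on with
  | _ t ih =>
    intro a b c ht
    rcases Nat.eq_zero_or_pos t with rfl | hpos
    · obtain ⟨rfl, rfl, rfl⟩ : a = 0 ∧ b = 0 ∧ c = 0 := by omega
      simp [W_zero, s2_nil]
    · rw [sum_W_split (fun w => 3 * (s2 w * s2 w)) a b c (by omega)]
      have hN : ((W a b c).card : ℤ) =
          (if a = 0 then 0 else ((W (a-1) b c).card : ℤ)) +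
          (if b = 0 then 0 else ((W a (b-1) c).card : ℤ)) +
          (if c = 0 then 0 else ((W a b (c-1)).card : ℤ)) := by
        rw [card_W_split a b c (by omega)]
        split_ifs <;> push_cast <;> ring
      have B1 : (if a = 0 then 0 else ∑ w ∈ W (a-1) b c, 3 * (s2 (1 :: w) * s2 (1 :: w))) =
          ((b:ℤ) * c * ((b:ℤ) + c + 1)) * (if a = 0 then 0 else ((W (a-1) b c).card : ℤ)) := by
        rcases a with _ | a'
        · simp
        · simp only [Nat.add_sub_cancel, if_neg (Nat.succ_ne_zero a')]
          have hc : ∑ w ∈ W a' b c, 3 * (s2 (1 :: w) * s2 (1 :: w)) =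
              ∑ w ∈ W a' b c, (3 * (s2 w * s2 w)) :=
            Finset.sum_congr rfl (fun w hw => by rw [s2_cons_one])
          rw [hc, ih (t-1) (by omega) a' b c (by omega)]
      have B2 : (if b = 0 then 0 else ∑ w ∈ W a (b-1) c, 3 * (s2 (2 :: w) * s2 (2 :: w))) =
          ((((b:ℤ)-1) * c * (((b:ℤ)-1) + c + 1)) + 3 * (c:ℤ)^2) *
            (if b = 0 then 0 else ((W a (b-1) c).card : ℤ)) := by
        rcases b with _ | b'
        · simp
        · simp only [Nat.add_sub_cancel, if_neg (Nat.succ_ne_zero b')]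
          have hc : ∑ w ∈ W a b' c, 3 * (s2 (2 :: w) * s2 (2 :: w)) =
              ∑ w ∈ W a b' c, (3 * (s2 w * s2 w) - (6 * (c:ℤ)) * s2 w + 3 * (c:ℤ)^2) :=
            Finset.sum_congr rfl (fun w hw => by
              rw [s2_cons_two, (mem_W.mp hw).2.2.1]; ring)
          rw [hc, Finset.sum_add_distrib, Finset.sum_sub_distrib,
            ih (t-1) (by omega) a b' c (by omega), ← Finset.mul_sum,
            sum_s2_eq (a + b' + c) a b' c rfl, mul_zero, sub_zero, Finset.sum_const]
          push_cast; ring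
      have B3 : (if c = 0 then 0 else ∑ w ∈ W a b (c-1), 3 * (s2 (3 :: w) * s2 (3 :: w))) =
          (((b:ℤ) * ((c:ℤ)-1) * ((b:ℤ) + ((c:ℤ)-1) + 1)) + 3 * (b:ℤ)^2) *
            (if c = 0 then 0 else ((W a b (c-1)).card : ℤ)) := by
        rcases c with _ | c'
        · simp
        · simp only [Nat.add_sub_cancel, if_neg (Nat.succ_ne_zero c')]
          have hc : ∑ w ∈ W a b c', 3 * (s2 (3 :: w) * s2 (3 :: w)) =
              ∑ w ∈ W a b c', (3 * (s2 w * s2 w) + (6 * (b:ℤ)) * s2 w + 3 * (b:ℤ)^2) :=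
            Finset.sum_congr rfl (fun w hw => by
              rw [s2_cons_three, (mem_W.mp hw).2.1]; ring)
          rw [hc, Finset.sum_add_distrib, Finset.sum_add_distrib,
            ih (t-1) (by omega) a b c' (by omega), ← Finset.mul_sum,
            sum_s2_eq (a + b + c') a b c' rfl, mul_zero, add_zero, Finset.sum_const]
          push_cast; ring
      rw [B1, B2, B3]
      linear_combination (-(b:ℤ) * c * ((b:ℤ) + c + 1)) * hN +
        (-2 * ((b:ℤ) - c)) * guarded_r23 a b c


theorem covariance_and_correlation (n : ℕ) (hn : 1 ≤ n) :
    Cov n (fun w => (s1 w : ℝ)) (fun w => (s2 w : ℝ)) = -((n : ℝ) ^ 3) / 3 ∧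
    Cov n (fun w => (s1 w : ℝ)) (fun w => (s2 w : ℝ)) /
      Real.sqrt (Cov n (fun w => (s1 w : ℝ)) (fun w => (s1 w : ℝ)) *
        Cov n (fun w => (s2 w : ℝ)) (fun w => (s2 w : ℝ))) =
      -(n : ℝ) / (2 * n + 1) := by
  have hNE : (W n n n).Nonempty :=
    ⟨_, by rw [W, List.mem_toFinset]; exact List.mem_permutations.mpr (List.Perm.refl _)⟩
  have hcard : 0 < (W n n n).card := Finset.card_pos.mpr hNE
  have hN0 : ((W n n n).card : ℝ) ≠ 0 := by positivity
  have hE1 : E n (fun w => (s1 w : ℝ)) = 0 := by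
    unfold E
    have : (∑ w ∈ W n n n, (s1 w : ℝ)) = ((∑ w ∈ W n n n, s1 w : ℤ) : ℝ) := by
      push_cast; rfl
    rw [this, sum_s1_eq (n+n+n) n n n rfl]
    simp
  have hE2 : E n (fun w => (s2 w : ℝ)) = 0 := by
    unfold E
    have : (∑ w ∈ W n n n, (s2 w : ℝ)) = ((∑ w ∈ W n n n, s2 w : ℤ) : ℝ) := by
      push_cast; rfl
    rw [this, sum_s2_eq (n+n+n) n n n rfl]
    simp
  have key12 : (∑ w ∈ W n n n, (s1 w : ℝ) * (s2 w : ℝ)) =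
      -(n:ℝ)^3 * ((W n n n).card : ℝ) / 3 := by
    have h := sum_s1s2_eq (n+n+n) n n n rfl
    have h' : ((∑ w ∈ W n n n, 3 * (s1 w * s2 w) : ℤ) : ℝ) =
        ((-((n:ℤ) * n * n) * (W n n n).card : ℤ) : ℝ) := by exact_mod_cast h
    push_cast at h'
    rw [Finset.sum_congr rfl (fun w _ => by ring :
      ∀ w ∈ W n n n, (3:ℝ) * ((s1 w:ℝ) * (s2 w:ℝ)) = 3 * ((s1 w:ℝ) * (s2 w:ℝ)))] at h'
    rw [← Finset.mul_sum] at h'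
    have h3 : (3:ℝ) * (∑ w ∈ W n n n, (s1 w : ℝ) * (s2 w : ℝ)) =
        -(n:ℝ)^3 * ((W n n n).card : ℝ) := by
      rw [h']; ring
    linarith
  have key11 : (∑ w ∈ W n n n, (s1 w : ℝ) * (s1 w : ℝ)) =
      (n:ℝ)^2 * (2*(n:ℝ)+1) * ((W n n n).card : ℝ) / 3 := by
    have h := sum_s1sq_eq (n+n+n) n n n rfl
    have h' : ((∑ w ∈ W n n n, 3 * (s1 w * s1 w) : ℤ) : ℝ) =
        (((n:ℤ) * n * ((n:ℤ) + n + 1) * (W n n n).card : ℤ) : ℝ) := by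
      exact_mod_cast h
    push_cast at h'
    rw [← Finset.mul_sum] at h'
    have h3 : (3:ℝ) * (∑ w ∈ W n n n, (s1 w : ℝ) * (s1 w : ℝ)) =
        (n:ℝ)^2 * (2*(n:ℝ)+1) * ((W n n n).card : ℝ) := by
      rw [h']; ring
    linarith
  have key22 : (∑ w ∈ W n n n, (s2 w : ℝ) * (s2 w : ℝ)) =
      (n:ℝ)^2 * (2*(n:ℝ)+1) * ((W n n n).card : ℝ) / 3 := by
    have h := sum_s2sq_eq (n+n+n) n n n rfl
    have h' : ((∑ w ∈ W n n n, 3 * (s2 w * s2 w) : ℤ) : ℝ) =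
        (((n:ℤ) * n * ((n:ℤ) + n + 1) * (W n n n).card : ℤ) : ℝ) := by
      exact_mod_cast h
    push_cast at h'
    rw [← Finset.mul_sum] at h'
    have h3 : (3:ℝ) * (∑ w ∈ W n n n, (s2 w : ℝ) * (s2 w : ℝ)) =
        (n:ℝ)^2 * (2*(n:ℝ)+1) * ((W n n n).card : ℝ) := by
      rw [h']; ring
    linarith
  have C12 : Cov n (fun w => (s1 w : ℝ)) (fun w => (s2 w : ℝ)) = -((n:ℝ)^3) / 3 := by
    unfold Cov
    rw [hE1, hE2]
    unfold E
    simp only [sub_zero]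
    rw [key12]
    field_simp
  have C11 : Cov n (fun w => (s1 w : ℝ)) (fun w => (s1 w : ℝ)) =
      (n:ℝ)^2 * (2*(n:ℝ)+1) / 3 := by
    unfold Cov
    rw [hE1]
    unfold E
    simp only [sub_zero]
    rw [key11]
    field_simp
  have C22 : Cov n (fun w => (s2 w : ℝ)) (fun w => (s2 w : ℝ)) =
      (n:ℝ)^2 * (2*(n:ℝ)+1) / 3 := by
    unfold Cov
    rw [hE2]
    unfold E
    simp only [sub_zero]
    rw [key22]
    field_simp
  refine ⟨C12, ?_⟩
  rw [C12, C11, C22]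
  have hv : (n:ℝ)^2 * (2*(n:ℝ)+1) / 3 ≥ 0 := by positivity
  rw [show ((n:ℝ)^2 * (2*(n:ℝ)+1) / 3) * ((n:ℝ)^2 * (2*(n:ℝ)+1) / 3)
      = ((n:ℝ)^2 * (2*(n:ℝ)+1) / 3)^2 from by ring, Real.sqrt_sq hv]
  have hn' : (n:ℝ) ≥ 1 := by exact_mod_cast hn
  have h1 : (n:ℝ) ≠ 0 := by linarith
  have h2 : 2*(n:ℝ)+1 ≠ 0 := by linarith
  field_simp
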